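/- Let G be a connected graph with |E(G)| = k(|V(G)|−1), with a fixed orientation. Then the permanent of the kDSI matrix of G modulo k+1 is invariant under the choice of special vertex (for all k, including the degenerate case |V(G)| = 2). -/

import Mathlib

/-- The permanent of a square matrix. -/
def perm {n R : Type*} [DecidableEq n] [Fintype n] [CommRing R] (A : Matrix n n R) : R :=
  ∑ σ : Equiv.Perm n, ∏ i, A i (σ i)

/-- Entry of the signed incidence matrix of an oriented multigraph. -/
def inc {V E : Type*} [DecidableEq V] (s t : E → V) (v : V) (e : E) : ℤ :=
  (if s e = v then 1 else 0) - (if t e = v then 1 else 0)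


section autolemmas
variable {R : Type*} [CommRing R] {l m : Type*} [Fintype l] [DecidableEq l]
  [Fintype m] [DecidableEq m]

lemma perm_reindex (A : Matrix m m R) (e f : l ≃ m) :
    perm (Matrix.of fun i j => A (e i) (f j)) = perm A := by
  unfold perm
  refine Fintype.sum_equiv
    ⟨fun σ => (e.symm.trans σ).trans f, fun τ => (e.trans τ).trans f.symm,
      fun σ => by ext i; simp, fun τ => by ext i; simp⟩ _ _ (fun σ => ?_)
  refine Fintype.prod_equiv e _ _ (fun i => ?_)
  simp

lemma perm_smul_rows (A : Matrix m m R) (d : m → R) :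
    perm (Matrix.of fun i j => d i * A i j) = (∏ i, d i) * perm A := by
  unfold perm
  rw [Finset.mul_sum]
  refine Finset.sum_congr rfl fun σ _ => ?_
  rw [← Finset.prod_mul_distrib]
  rfl
lemma perm_expand {κ ι : Type*} [Fintype κ] [DecidableEq κ] [Fintype ι] [DecidableEq ι]
    (A : Matrix m m R) (ε : κ → m) (hε : Function.Injective ε)
    (g : κ → ι → m → R) (hA : ∀ c j, A (ε c) j = ∑ x : ι, g c x j)
    (B : (κ → ι) → Matrix m m R)
    (hB1 : ∀ f c j, B f (ε c) j = g c (f c) j)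
    (hB2 : ∀ f i j, (∀ c, ε c ≠ i) → B f i j = A i j) :
    perm A = ∑ f : κ → ι, perm (B f) := by
  classical
  have key : ∀ (M : Matrix m m R) (h1 : ∀ c j, M (ε c) j = M (ε c) j) (σ : Equiv.Perm m),
      ∏ i, M i (σ i) =
        (∏ c, M (ε c) (σ (ε c))) * ∏ i ∈ (Finset.univ.image ε)ᶜ, M i (σ i) := by
    intro M _ σ
    rw [← Finset.prod_mul_prod_compl (Finset.univ.image ε) (fun i => M i (σ i))]
    congr 1
    rw [Finset.prod_image (fun a _ b _ h => hε h)]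
  unfold perm
  rw [Finset.sum_comm]
  refine Finset.sum_congr rfl fun σ _ => ?_
  rw [key A (fun _ _ => rfl) σ]
  have expand : (∏ c, A (ε c) (σ (ε c))) =
      ∑ f : κ → ι, ∏ c, g c (f c) (σ (ε c)) := by
    simp_rw [hA]
    rw [Finset.prod_univ_sum]
    rw [Fintype.piFinset_univ]
  rw [expand, Finset.sum_mul]
  refine Finset.sum_congr rfl fun f _ => ?_
  rw [key (B f) (fun _ _ => rfl) σ]
  congr 1
  · exact Finset.prod_congr rfl fun c _ => (hB1 f c _).symm
  · refine Finset.prod_congr rfl fun i hi => ?_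
    rw [hB2 f i _ ?_]
    intro c hc
    simp only [Finset.mem_compl, Finset.mem_image] at hi
    exact hi ⟨c, Finset.mem_univ c, hc⟩
lemma card_dvd_perm (A : Matrix m m R) (H : Subgroup (Equiv.Perm m))
    (hH : ∀ h ∈ H, ∀ i j, A (h i) j = A i j) :
    (Nat.card H : R) ∣ perm A := by
  classical
  set G := Equiv.Perm m
  set F : G → R := fun τ => ∏ i, A i (τ i) with hF
  have hinv : ∀ τ : G, ∀ h ∈ H, F (τ * h) = F τ := by
    intro τ h hh
    calc F (τ * h) = ∏ i, A i (τ (h i)) := rfl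
      _ = ∏ i, A (h i) (τ (h i)) :=
          Finset.prod_congr rfl fun i _ => (hH h hh i _).symm
      _ = ∏ i, A i (τ i) := Equiv.prod_comp h (fun x => A x (τ x))
  have : Fintype (G ⧸ H) := Fintype.ofFinite _
  have split : perm A = ∑ q : G ⧸ H,
      ∑ τ ∈ Finset.univ.filter (fun τ => (QuotientGroup.mk τ : G ⧸ H) = q), F τ := by
    rw [perm]
    exact (Finset.sum_fiberwise Finset.univ (fun τ => (QuotientGroup.mk τ : G ⧸ H)) F).symm
  have fib : ∀ q : G ⧸ H,
      (∑ τ ∈ Finset.univ.filter (fun τ => (QuotientGroup.mk τ : G ⧸ H) = q), F τ)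
        = (Nat.card H : R) * F q.out := by
    intro q
    have hconst : ∀ τ ∈ Finset.univ.filter (fun τ => (QuotientGroup.mk τ : G ⧸ H) = q),
        F τ = F q.out := by
      intro τ hτ
      simp only [Finset.mem_filter, Finset.mem_univ, true_and] at hτ
      have hmk : (QuotientGroup.mk q.out : G ⧸ H) = QuotientGroup.mk τ := by
        rw [hτ, QuotientGroup.out_eq']
      have hmem : q.out⁻¹ * τ ∈ H := QuotientGroup.eq.mp hmk
      have : τ = q.out * (q.out⁻¹ * τ) := by group
      rw [this]
      exact hinv _ _ hmem
    rw [Finset.sum_congr rfl hconst, Finset.sum_const]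
    have hcard : (Finset.univ.filter
        (fun τ => (QuotientGroup.mk τ : G ⧸ H) = q)).card = Nat.card H := by
      rw [Nat.card_eq_fintype_card, ← Fintype.card_subtype]
      refine Fintype.card_congr ⟨fun τ => ⟨q.out⁻¹ * τ.1, ?_⟩,
        fun h => ⟨q.out * (h : G), ?_⟩, fun τ => ?_, fun h => ?_⟩
      · refine QuotientGroup.eq.mp ?_
        rw [τ.2, QuotientGroup.out_eq']
      · rw [QuotientGroup.mk_mul_of_mem _ h.2, QuotientGroup.out_eq']
      · ext; simp [mul_inv_cancel_left]
      · ext; simp [mul_inv_cancel_left]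
    rw [hcard, nsmul_eq_mul]
  rw [split, Finset.sum_congr rfl (fun q _ => fib q), ← Finset.mul_sum]
  exact ⟨_, rfl⟩

lemma factorial_dvd_perm (A : Matrix m m R) (r : ℕ) (ι : Fin r → m)
    (hι : Function.Injective ι) (hrow : ∀ a b j, A (ι a) j = A (ι b) j) :
    ((r.factorial : ℕ) : R) ∣ perm A := by
  classical
  set e : Fin r ≃ Set.range ι := Equiv.ofInjective ι hι
  set φ : Equiv.Perm (Fin r) →* Equiv.Perm m := Equiv.Perm.extendDomainHom e
  have hcard : Nat.card φ.range = r.factorial := by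
    rw [Nat.card_congr (MonoidHom.ofInjective (Equiv.Perm.extendDomainHom_injective e)).toEquiv.symm]
    simp [Nat.card_eq_fintype_card, Fintype.card_perm]
  have := card_dvd_perm A φ.range ?_
  · rwa [hcard] at this
  · rintro h ⟨π, rfl⟩ i j
    by_cases hi : i ∈ Set.range ι
    · obtain ⟨a, rfl⟩ := hi
      have : (φ π) (ι a) = ι (π a) := by
        have := π.extendDomain_apply_image (f := e) a
        simpa [e, φ, Equiv.Perm.extendDomainHom] using this
      rw [this]
      exact hrow _ _ _
    · have : (φ π) i = i := π.extendDomain_apply_not_subtype (f := e) hi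
      rw [this]
lemma inc_sum {V E : Type*} [Fintype V] [DecidableEq V] (s t : E → V) (e : E) :
    ∑ x : V, inc s t x e = 0 := by
  simp [inc, Finset.sum_sub_distrib, Finset.sum_ite_eq]

lemma inc_eq_sum_neg {V E : Type*} [Fintype V] [DecidableEq V] (s t : E → V) (u : V) (e : E) :
    inc s t u e = ∑ x : {x : V // x ≠ u}, -(inc s t x.1 e) := by
  have h0 := inc_sum s t e
  rw [← Finset.add_sum_erase _ _ (Finset.mem_univ u)] at h0
  have hsub : ∑ x ∈ Finset.univ.erase u, inc s t x e
      = ∑ x : {x : V // x ≠ u}, inc s t x.1 e := by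
    exact Finset.sum_subtype _ (fun x => by simp [Finset.mem_erase]) _
  rw [Finset.sum_neg_distrib, ← hsub]
  omega


end autolemmas

/-- For a connected loopless multigraph G with |E| = k(|V|−1) and a fixed orientation,
the permanent of the kDSI matrix modulo k+1 is invariant under the choice of special
vertex (for all k, including the degenerate case |V(G)| = 2). -/
theorem stmt11 {V E : Type*} [Fintype V] [Fintype E] [DecidableEq V] [DecidableEq E]
    (s t : E → V) (hloop : ∀ e, s e ≠ t e)
    (hconn : (SimpleGraph.fromRel (fun a b => ∃ e, s e = a ∧ t e = b)).Connected)
    (k : ℕ) (hcard : Fintype.card E = k * (Fintype.card V - 1))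
    (u v : V)
    (ρu : (Fin k × {x : V // x ≠ u}) ≃ E) (ρv : (Fin k × {x : V // x ≠ v}) ≃ E) :
    perm (Matrix.of fun i j : Fin k × {x : V // x ≠ u} => inc s t i.2.1 (ρu j))
      ≡ perm (Matrix.of fun i j : Fin k × {x : V // x ≠ v} => inc s t i.2.1 (ρv j))
      [ZMOD ((k : ℤ) + 1)] := by
  classical
  by_cases huv : u = v
  · subst huv
    have : perm (Matrix.of fun i j : Fin k × {x : V // x ≠ u} => inc s t i.2.1 (ρu j))
        = perm (Matrix.of fun i j : Fin k × {x : V // x ≠ u} => inc s t i.2.1 (ρv j)) := by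
      have := perm_reindex (R := ℤ)
        (Matrix.of fun i j : Fin k × {x : V // x ≠ u} => inc s t i.2.1 (ρv j))
        (Equiv.refl _) (ρu.trans ρv.symm)
      rw [← this]
      congr 1
      ext i j
      simp
    rw [this]
  -- main case u ≠ v
  set n : ℤ := (k : ℤ) + 1 with hn
  set Au := Matrix.of fun i j : Fin k × {x : V // x ≠ u} => inc s t i.2.1 (ρu j) with hAu
  set Av := Matrix.of fun i j : Fin k × {x : V // x ≠ v} => inc s t i.2.1 (ρv j) with hAv
  set Pu := perm Au with hPu
  set Pv := perm Av with hPv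
  have hvu : v ≠ u := Ne.symm huv
  set uv : {x : V // x ≠ v} := ⟨u, huv⟩ with huv'
  set vu : {x : V // x ≠ u} := ⟨v, hvu⟩ with hvu'
  set ε : Fin k → Fin k × {x : V // x ≠ v} := fun c => (c, uv) with hε
  set B : (Fin k → {x : V // x ≠ u}) → Matrix (Fin k × {x : V // x ≠ v}) (Fin k × {x : V // x ≠ v}) ℤ :=
    fun f => Matrix.of fun i j =>
      if i.2.1 = u then -(inc s t (f i.1).1 (ρv j)) else inc s t i.2.1 (ρv j) with hB
  have hεinj : Function.Injective ε := by
    intro c c' h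
    simpa [hε, Prod.ext_iff] using h
  -- F1 : expansion
  have F1 : Pv = ∑ f : Fin k → {x : V // x ≠ u}, perm (B f) := by
    refine perm_expand Av ε hεinj (fun c x j => -(inc s t x.1 (ρv j))) ?_ B ?_ ?_
    · intro c j
      show inc s t u (ρv j) = _
      exact inc_eq_sum_neg s t u (ρv j)
    · intro f c j
      simp [hB, hε, huv']
    · intro f i j hi
      have h2 : i.2.1 ≠ u := by
        intro h
        exact hi i.1 (Prod.ext rfl (Subtype.ext h.symm))
      simp [hB, hAv, h2]
  set f0 : Fin k → {x : V // x ≠ u} := fun _ => vu with hf0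
  -- F2 : the constant function term
  have hswap : ∀ a : V, (a ≠ v) ↔ (Equiv.swap u v a ≠ u) := by
    intro a
    constructor
    · intro h h2
      exact h ((Equiv.swap u v).injective (h2.trans (Equiv.swap_apply_right u v).symm))
    · intro h h2
      exact h (by rw [h2, Equiv.swap_apply_right])
  set ψ : {x : V // x ≠ v} ≃ {x : V // x ≠ u} := (Equiv.swap u v).subtypeEquiv hswap with hψ
  set eRow : (Fin k × {x : V // x ≠ v}) ≃ (Fin k × {x : V // x ≠ u}) :=
    (Equiv.refl (Fin k)).prodCongr ψ with heRow
  set C : Matrix (Fin k × {x : V // x ≠ v}) (Fin k × {x : V // x ≠ v}) ℤ :=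
    Matrix.of (fun i j => Au (eRow i) ((ρv.trans ρu.symm) j)) with hC
  set d : Fin k × {x : V // x ≠ v} → ℤ := fun i => if i.2 = uv then -1 else 1 with hd
  have F2 : perm (B f0) = (-1)^k * Pu := by
    have hBd : B f0 = Matrix.of (fun i j => d i * C i j) := by
      ext i j
      by_cases h : i.2.1 = u
      · have h2 : i.2 = uv := Subtype.ext h
        simp [hB, hC, hAu, hd, h, h2, heRow, hψ, hf0, huv', hvu', Equiv.swap_apply_left]
      · have h2 : i.2 ≠ uv := fun hh => h (by rw [hh])
        have h3 : Equiv.swap u v i.2.1 = i.2.1 :=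
          Equiv.swap_apply_of_ne_of_ne h i.2.2
        simp [hB, hC, hAu, hd, h, h2, heRow, hψ, h3]
    rw [hBd, perm_smul_rows C d]
    have hprodd : (∏ i, d i) = (-1)^k := by
      rw [Fintype.prod_prod_type]
      simp [hd, Finset.prod_ite_eq']
    have hpermC : perm C = Pu := by
      rw [hC, hPu]
      exact perm_reindex Au eRow (ρv.trans ρu.symm)
    rw [hprodd, hpermC]
  -- F3 : nonconstant terms vanish mod n
  have F3 : ∀ f : Fin k → {x : V // x ≠ u}, f ≠ f0 → n ∣ perm (B f) := by
    intro f hf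
    obtain ⟨c0, hc0⟩ := Function.ne_iff.mp hf
    have hx0u : (f c0).1 ≠ u := (f c0).2
    have hx0v : (f c0).1 ≠ v := fun h => hc0 (Subtype.ext (h.trans rfl))
    set x0v : {x : V // x ≠ v} := ⟨(f c0).1, hx0v⟩ with hx0v'
    set d2 : Fin k × {x : V // x ≠ v} → ℤ := fun i => if i = (c0, uv) then -1 else 1 with hd2
    set B2 : Matrix (Fin k × {x : V // x ≠ v}) (Fin k × {x : V // x ≠ v}) ℤ :=
      Matrix.of (fun i j => d2 i * B f i j) with hB2
    have hperm2 : perm B2 = -perm (B f) := by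
      rw [hB2, perm_smul_rows (B f) d2]
      have : (∏ i, d2 i) = -1 := by
        simp [hd2, Finset.prod_ite_eq']
      rw [this]; ring
    set ι : Fin (k+1) → Fin k × {x : V // x ≠ v} :=
      fun a => if h : (a : ℕ) < k then (⟨a, h⟩, x0v) else (c0, uv) with hι
    have hιinj : Function.Injective ι := by
      intro a b hab
      by_cases ha : (a : ℕ) < k <;> by_cases hb : (b : ℕ) < k
      · simp only [hι, dif_pos ha, dif_pos hb, Prod.mk.injEq, Fin.mk.injEq] at hab
        exact Fin.ext hab.1
      · simp only [hι, dif_pos ha, dif_neg hb, Prod.mk.injEq] at hab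
        exact absurd (congrArg Subtype.val hab.2) hx0u
      · simp only [hι, dif_neg ha, dif_pos hb, Prod.mk.injEq] at hab
        exact absurd (congrArg Subtype.val hab.2).symm hx0u
      · have h1 := a.isLt
        have h2 := b.isLt
        exact Fin.ext (by omega)
    have hrow : ∀ a j, B2 (ι a) j = inc s t (f c0).1 (ρv j) := by
      intro a j
      by_cases ha : (a : ℕ) < k
      · have h1 : ι a = (⟨(a : ℕ), ha⟩, x0v) := by simp [hι, ha]
        have h2 : (⟨(a : ℕ), ha⟩, x0v) ≠ (c0, uv) := by
          intro hh
          exact hx0u (congrArg (fun p => (Prod.snd p : {x : V // x ≠ v}).1) hh)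
        rw [h1]
        simp [hB2, hd2, hB, h2, hx0u, hx0v', huv']
      · have h1 : ι a = (c0, uv) := by simp [hι, ha]
        rw [h1]
        simp [hB2, hd2, hB, huv']
    have hdvd2 : (((k+1).factorial : ℕ) : ℤ) ∣ perm B2 :=
      factorial_dvd_perm B2 (k+1) ι hιinj (fun a b j => by rw [hrow a j, hrow b j])
    have hn1 : n ∣ (((k+1).factorial : ℕ) : ℤ) := by
      have : (k+1) ∣ (k+1).factorial := Nat.dvd_factorial (by omega) le_rfl
      have := Int.natCast_dvd_natCast.mpr this
      simpa [hn] using this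
    have : n ∣ perm B2 := hn1.trans hdvd2
    rw [hperm2] at this
    exact (dvd_neg.mp this)
  -- F4 : k! divides Pu
  have F4 : ((k.factorial : ℕ) : ℤ) ∣ Pu := by
    refine factorial_dvd_perm Au k (fun c => (c, vu)) ?_ ?_
    · intro c c' h
      simpa [Prod.ext_iff] using h
    · intro a b j
      simp [hAu]
  -- assemble
  have h1 : n ∣ Pv - (-1)^k * Pu := by
    have hsplit : Pv = perm (B f0) + ∑ f ∈ Finset.univ.erase f0, perm (B f) := by
      rw [F1]
      exact (Finset.add_sum_erase _ (fun f => perm (B f)) (Finset.mem_univ f0)).symm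
    rw [hsplit, F2]
    simp only [add_sub_cancel_left]
    exact Finset.dvd_sum (fun f hf => F3 f (Finset.ne_of_mem_erase hf))
  have h2 : n ∣ Pu - (-1)^k * Pu := by
    rcases Nat.even_or_odd k with hk | hk
    · rw [hk.neg_one_pow]; simp
    · rw [hk.neg_one_pow]
      obtain ⟨jj, hjj⟩ := hk
      have hk1 : 1 ≤ k := by omega
      set m := (k+1)/2 with hm
      have hm2 : k + 1 = 2 * m := by omega
      have hmdvd : m ∣ k.factorial := Nat.dvd_factorial (by omega) (by omega)
      have : (k+1) ∣ 2 * k.factorial := by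
        rw [hm2]
        exact mul_dvd_mul_left 2 hmdvd
      have hdvd : n ∣ ((2 * k.factorial : ℕ) : ℤ) := by
        have := Int.natCast_dvd_natCast.mpr this
        simpa [hn] using this
      obtain ⟨c, hc⟩ := F4
      have : Pu - (-1) * Pu = ((2 * k.factorial : ℕ) : ℤ) * c := by
        rw [hc]; push_cast; ring
      rw [this]
      exact hdvd.mul_right c
  have : n ∣ Pv - Pu := by
    have hh : Pv - Pu = (Pv - (-1)^k * Pu) - (Pu - (-1)^k * Pu) := by ring
    rw [hh]
    exact dvd_sub h1 h2
  exact (Int.modEq_iff_dvd.mpr this)
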